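/- Let 𝒴 ⊆ ℂⁿ be a p-dimensional subspace with Ritz values η₁ ≥ ⋯ ≥ η_p of A in 𝒴, assume η_p > λ_{p+1}, and let f : ℝ → ℝ satisfy |f(λ₁)| ≥ ⋯ ≥ |f(λ_p)| > ν_p where ν_p = max_{j ∈ {p+1, …, n}} |f(λⱼ)|. Let y ∈ 𝒴 be a nonzero vector with η_p ≤ ρ(y) < λ_p, and define y_p = Σ_{j=1}^{p} xⱼ(xⱼᴴy) and y° = f(λ_p) y_p + ν_p (y − y_p). Then y_p ≠ 0, y − y_p ≠ 0, and (ρ(y_p) − ρ(y°))/(ρ(y°) − ρ(y − y_p)) = (ν_p²/|f(λ_p)|²) · (ρ(y_p) − ρ(y))/(ρ(y) − ρ(y − y_p)). -/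

import Mathlib

/-- The Rayleigh quotient `ρ(v) = (vᴴAv)/(vᴴv)` of the Hermitian matrix `A`. -/
noncomputable def rayleigh {n : ℕ} (A : Matrix (Fin n) (Fin n) ℂ)
    (v : EuclideanSpace ℂ (Fin n)) : ℝ :=
  ((inner ℂ v (Matrix.toEuclideanLin A v) : ℂ)).re / ‖v‖ ^ 2

/-- The `i`-th largest Ritz value (1-indexed, `i ∈ {1, …, dim S}`) of the Hermitian
matrix `A` in the subspace `S`, characterized via the Courant–Fischer max-min
principle applied inside `S` (equivalently, the `i`-th largest eigenvalue of
`SᴴAS` for any orthonormal basis matrix `S`). -/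
noncomputable def ritzValue {n : ℕ} (A : Matrix (Fin n) (Fin n) ℂ)
    (S : Submodule ℂ (EuclideanSpace ℂ (Fin n))) (i : ℕ) : ℝ :=
  sSup {r : ℝ | ∃ T : Submodule ℂ (EuclideanSpace ℂ (Fin n)), T ≤ S ∧
    Module.finrank ℂ T = i ∧ ∀ v ∈ T, v ≠ 0 → r ≤ rayleigh A v}

/-- `f(A) = ∑ j, f(λ_j) x_j x_jᴴ` as a linear operator, for eigenvalues `lam`
and orthonormal eigenvectors `x` of `A`. -/
noncomputable def matFun {n : ℕ} (lam : Fin n → ℝ)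
    (x : Fin n → EuclideanSpace ℂ (Fin n)) (f : ℝ → ℝ) :
    EuclideanSpace ℂ (Fin n) →ₗ[ℂ] EuclideanSpace ℂ (Fin n) :=
  ∑ j : Fin n, (f (lam j) : ℂ) • ((innerSL ℂ (x j)).toLinearMap.smulRight (x j))

/-- `y` is a Ritz vector of `A` in `S` associated with the Ritz value `η`:
`y ∈ S`, `y ≠ 0`, `ρ(y) = η` and `Ay − ηy ⊥ S`. -/
def IsRitzVector {n : ℕ} (A : Matrix (Fin n) (Fin n) ℂ)
    (S : Submodule ℂ (EuclideanSpace ℂ (Fin n))) (η : ℝ)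
    (y : EuclideanSpace ℂ (Fin n)) : Prop :=
  y ∈ S ∧ y ≠ 0 ∧ rayleigh A y = η ∧
    ∀ v ∈ S, (inner ℂ v (Matrix.toEuclideanLin A y - (η : ℂ) • y) : ℂ) = 0

private lemma cmr (z : ℂ) (r : ℝ) : ((r:ℂ) * ((starRingEnd ℂ) z * z)).re = r * ‖z‖^2 := by
  rw [mul_comm ((starRingEnd ℂ) z) z, Complex.mul_conj, ← Complex.ofReal_mul,
    Complex.ofReal_re]
  simp [Complex.normSq_eq_norm_sq]

private lemma cmr' (z : ℂ) : ((starRingEnd ℂ) z * z).re = ‖z‖^2 := by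
  rw [mul_comm ((starRingEnd ℂ) z) z, Complex.mul_conj, Complex.ofReal_re]
  simp [Complex.normSq_eq_norm_sq]

private lemma ray_formula {n : ℕ} (A : Matrix (Fin n) (Fin n) ℂ)
    (lam : Fin n → ℝ) (x : Fin n → EuclideanSpace ℂ (Fin n)) (hx : Orthonormal ℂ x)
    (heig : ∀ j, Matrix.toEuclideanLin A (x j) = (lam j : ℂ) • x j)
    (F : Finset (Fin n)) (d : Fin n → ℂ) :
    ((inner ℂ (∑ j ∈ F, d j • x j) (Matrix.toEuclideanLin A (∑ j ∈ F, d j • x j)) : ℂ)).re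
        = ∑ j ∈ F, lam j * ‖d j‖ ^ 2 ∧
      ‖∑ j ∈ F, d j • x j‖ ^ 2 = ∑ j ∈ F, ‖d j‖ ^ 2 := by
  have hAu : Matrix.toEuclideanLin A (∑ j ∈ F, d j • x j)
      = ∑ j ∈ F, ((lam j : ℂ) * d j) • x j := by
    rw [map_sum]
    refine Finset.sum_congr rfl fun j _ => ?_
    rw [map_smul, heig, smul_smul, mul_comm]
  constructor
  · rw [hAu, hx.inner_sum, Complex.re_sum]
    refine Finset.sum_congr rfl fun j _ => ?_
    have h2 : (starRingEnd ℂ) (d j) * ((lam j : ℂ) * d j)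
        = (lam j : ℂ) * ((starRingEnd ℂ) (d j) * d j) := by ring
    rw [h2]; exact cmr _ _
  · have h1 : ((inner ℂ (∑ j ∈ F, d j • x j) (∑ j ∈ F, d j • x j) : ℂ)).re
        = ‖∑ j ∈ F, d j • x j‖ ^ 2 := by
      have := @inner_self_eq_norm_sq ℂ _ _ _ _ (∑ j ∈ F, d j • x j)
      simpa [RCLike.re_to_complex] using this
    rw [← h1, hx.inner_sum, Complex.re_sum]
    exact Finset.sum_congr rfl fun j _ => cmr' _

set_option maxHeartbeats 1600000 in
theorem stmt5 {n p : ℕ} (hp : 0 < p) (hpn : p < n)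
    (A : Matrix (Fin n) (Fin n) ℂ) (hA : A.IsHermitian)
    (lam : Fin n → ℝ) (hlam : Antitone lam)
    (x : Fin n → EuclideanSpace ℂ (Fin n)) (hx : Orthonormal ℂ x)
    (heig : ∀ j, Matrix.toEuclideanLin A (x j) = (lam j : ℂ) • x j)
    (Y : Submodule ℂ (EuclideanSpace ℂ (Fin n))) (hY : Module.finrank ℂ Y = p)
    (hηp : lam ⟨p, hpn⟩ < ritzValue A Y p)
    (f : ℝ → ℝ) (νp : ℝ)
    (hνp : IsGreatest ((fun j => |f (lam j)|) '' {j : Fin n | p ≤ (j : ℕ)}) νp)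
    (hmono : ∀ j k : Fin n, (j : ℕ) ≤ (k : ℕ) → (k : ℕ) < p →
      |f (lam k)| ≤ |f (lam j)|)
    (hgt : νp < |f (lam ⟨p - 1, by omega⟩)|)
    (y : EuclideanSpace ℂ (Fin n)) (hyY : y ∈ Y) (hy0 : y ≠ 0)
    (hyge : ritzValue A Y p ≤ rayleigh A y)
    (hylt : rayleigh A y < lam ⟨p - 1, by omega⟩)
    (yp yo : EuclideanSpace ℂ (Fin n))
    (hyp : yp = ∑ j ∈ Finset.univ.filter (fun j : Fin n => (j : ℕ) < p),
      (inner ℂ (x j) y : ℂ) • x j)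
    (hyo : yo = (f (lam ⟨p - 1, by omega⟩) : ℂ) • yp + (νp : ℂ) • (y - yp)) :
    yp ≠ 0 ∧ y - yp ≠ 0 ∧
    (rayleigh A yp - rayleigh A yo) / (rayleigh A yo - rayleigh A (y - yp)) =
      νp ^ 2 / |f (lam ⟨p - 1, by omega⟩)| ^ 2 *
        ((rayleigh A yp - rayleigh A y) / (rayleigh A y - rayleigh A (y - yp))) := by
  classical
  haveI : Nonempty (Fin n) := ⟨⟨0, by omega⟩⟩
  have hpm1 : p - 1 < n := by omega
  have hgt' : νp < |f (lam ⟨p - 1, hpm1⟩)| := hgt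
  have hylt' : rayleigh A y < lam ⟨p - 1, hpm1⟩ := hylt
  -- orthonormal basis
  have hcard : Fintype.card (Fin n) = Module.finrank ℂ (EuclideanSpace ℂ (Fin n)) := by simp
  have hspan : ⊤ ≤ Submodule.span ℂ (Set.range x) :=
    (hx.linearIndependent.span_eq_top_of_card_eq_finrank hcard).ge
  have hrep : y = ∑ j, (inner ℂ (x j) y : ℂ) • x j := by
    conv_lhs => rw [← (OrthonormalBasis.mk hx hspan).sum_repr' y]
    exact Finset.sum_congr rfl fun j _ => by rw [OrthonormalBasis.coe_mk]
  set c : Fin n → ℂ := fun j => (inner ℂ (x j) y : ℂ) with hcdef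
  set F : Finset (Fin n) := Finset.univ.filter (fun j : Fin n => (j : ℕ) < p) with hFdef
  set G : Finset (Fin n) := Finset.univ.filter (fun j : Fin n => ¬ (j : ℕ) < p) with hGdef
  have hyp' : yp = ∑ j ∈ F, c j • x j := hyp
  have hsplit : ∀ g : Fin n → EuclideanSpace ℂ (Fin n),
      ∑ j, g j = ∑ j ∈ F, g j + ∑ j ∈ G, g j := fun g =>
    (Finset.sum_filter_add_sum_filter_not Finset.univ _ g).symm
  have hsplitR : ∀ g : Fin n → ℝ,
      ∑ j, g j = ∑ j ∈ F, g j + ∑ j ∈ G, g j := fun g =>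
    (Finset.sum_filter_add_sum_filter_not Finset.univ _ g).symm
  have hw : y - yp = ∑ j ∈ G, c j • x j := by
    rw [hyp']
    conv_lhs => rw [hrep]
    rw [hsplit (fun j => c j • x j)]
    abel
  obtain ⟨hipF, hnpF⟩ := ray_formula A lam x hx heig F c
  obtain ⟨hipG, hnpG⟩ := ray_formula A lam x hx heig G c
  obtain ⟨hipU, hnpU⟩ := ray_formula A lam x hx heig Finset.univ c
  have hrayp : rayleigh A yp
      = (∑ j ∈ F, lam j * ‖c j‖ ^ 2) / (∑ j ∈ F, ‖c j‖ ^ 2) := by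
    rw [hyp']; unfold rayleigh; rw [hipF, hnpF]
  have hrayw : rayleigh A (y - yp)
      = (∑ j ∈ G, lam j * ‖c j‖ ^ 2) / (∑ j ∈ G, ‖c j‖ ^ 2) := by
    rw [hw]; unfold rayleigh; rw [hipG, hnpG]
  have hrayy : rayleigh A y
      = ((∑ j ∈ F, lam j * ‖c j‖ ^ 2) + (∑ j ∈ G, lam j * ‖c j‖ ^ 2))
        / ((∑ j ∈ F, ‖c j‖ ^ 2) + (∑ j ∈ G, ‖c j‖ ^ 2)) := by
    unfold rayleigh
    conv_lhs => rw [hrep]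
    rw [hipU, hnpU, hsplitR (fun j => lam j * ‖c j‖ ^ 2), hsplitR (fun j => ‖c j‖ ^ 2)]
  -- the combined vector yo
  set α : ℝ := f (lam ⟨p - 1, hpm1⟩) with hαdef
  have hyo2 : yo = (α : ℂ) • yp + (νp : ℂ) • (y - yp) := hyo
  set d : Fin n → ℂ := fun j => if (j : ℕ) < p then (α : ℂ) * c j else (νp : ℂ) * c j
    with hddef
  have hd1 : ∀ j ∈ F, d j = (α : ℂ) * c j := fun j hj => by
    have : (j : ℕ) < p := by simpa [hFdef] using hj
    simp [hddef, this]
  have hd2 : ∀ j ∈ G, d j = (νp : ℂ) * c j := fun j hj => by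
    have : ¬ (j : ℕ) < p := by simpa [hGdef] using hj
    simp [hddef, this]
  have hyo' : yo = ∑ j, d j • x j := by
    rw [hyo2, hw, hyp', Finset.smul_sum, Finset.smul_sum, hsplit (fun j => d j • x j)]
    congr 1
    · exact Finset.sum_congr rfl fun j hj => by rw [hd1 j hj, smul_smul]
    · exact Finset.sum_congr rfl fun j hj => by rw [hd2 j hj, smul_smul]
  obtain ⟨hipD, hnpD⟩ := ray_formula A lam x hx heig Finset.univ d
  have hdF1 : ∑ j ∈ F, lam j * ‖d j‖ ^ 2 = α ^ 2 * ∑ j ∈ F, lam j * ‖c j‖ ^ 2 := by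
    rw [Finset.mul_sum]
    refine Finset.sum_congr rfl fun j hj => ?_
    rw [hd1 j hj, norm_mul, mul_pow, Complex.norm_real, Real.norm_eq_abs, sq_abs]
    ring
  have hdF2 : ∑ j ∈ F, ‖d j‖ ^ 2 = α ^ 2 * ∑ j ∈ F, ‖c j‖ ^ 2 := by
    rw [Finset.mul_sum]
    refine Finset.sum_congr rfl fun j hj => ?_
    rw [hd1 j hj, norm_mul, mul_pow, Complex.norm_real, Real.norm_eq_abs, sq_abs]
  have hdG1 : ∑ j ∈ G, lam j * ‖d j‖ ^ 2 = νp ^ 2 * ∑ j ∈ G, lam j * ‖c j‖ ^ 2 := by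
    rw [Finset.mul_sum]
    refine Finset.sum_congr rfl fun j hj => ?_
    rw [hd2 j hj, norm_mul, mul_pow, Complex.norm_real, Real.norm_eq_abs, sq_abs]
    ring
  have hdG2 : ∑ j ∈ G, ‖d j‖ ^ 2 = νp ^ 2 * ∑ j ∈ G, ‖c j‖ ^ 2 := by
    rw [Finset.mul_sum]
    refine Finset.sum_congr rfl fun j hj => ?_
    rw [hd2 j hj, norm_mul, mul_pow, Complex.norm_real, Real.norm_eq_abs, sq_abs]
  have hrayo : rayleigh A yo
      = (α ^ 2 * (∑ j ∈ F, lam j * ‖c j‖ ^ 2) + νp ^ 2 * (∑ j ∈ G, lam j * ‖c j‖ ^ 2))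
        / (α ^ 2 * (∑ j ∈ F, ‖c j‖ ^ 2) + νp ^ 2 * (∑ j ∈ G, ‖c j‖ ^ 2)) := by
    rw [hyo']; unfold rayleigh
    rw [hipD, hnpD, hsplitR (fun j => lam j * ‖d j‖ ^ 2), hsplitR (fun j => ‖d j‖ ^ 2),
      hdF1, hdF2, hdG1, hdG2]
  -- name the four real quantities
  set a : ℝ := ∑ j ∈ F, lam j * ‖c j‖ ^ 2 with hadef
  set s : ℝ := ∑ j ∈ F, ‖c j‖ ^ 2 with hsdef
  set b2 : ℝ := ∑ j ∈ G, lam j * ‖c j‖ ^ 2 with hb2def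
  set t : ℝ := ∑ j ∈ G, ‖c j‖ ^ 2 with htdef
  -- positivity facts
  have hs0 : 0 ≤ s := Finset.sum_nonneg fun j _ => by positivity
  have ht0 : 0 ≤ t := Finset.sum_nonneg fun j _ => by positivity
  have hy2 : ‖y‖ ^ 2 = s + t := by
    conv_lhs => rw [hrep]
    rw [hnpU, hsplitR (fun j => ‖c j‖ ^ 2)]
  have hstpos : 0 < s + t := by
    rw [← hy2]
    have : 0 < ‖y‖ := norm_pos_iff.mpr hy0
    positivity
  have hνp0 : 0 ≤ νp := by
    obtain ⟨j, _, hje⟩ := hνp.1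
    rw [← hje]; exact abs_nonneg _
  have hαabs : 0 < |α| := lt_of_le_of_lt hνp0 hgt'
  have hα2 : (0:ℝ) < α ^ 2 := by
    rw [← sq_abs]; positivity
  have hray_gt : lam ⟨p, hpn⟩ < rayleigh A y := lt_of_lt_of_le hηp hyge
  -- bounds
  have haub : lam ⟨p - 1, hpm1⟩ * s ≤ a := by
    rw [hadef, hsdef, Finset.mul_sum]
    refine Finset.sum_le_sum fun j hj => ?_
    have hjlt : (j : ℕ) < p := by simpa [hFdef] using hj
    have hle : lam ⟨p - 1, hpm1⟩ ≤ lam j := by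
      apply hlam
      rw [Fin.le_def]
      simp only []
      omega
    exact mul_le_mul_of_nonneg_right hle (by positivity)
  have hbub : b2 ≤ lam ⟨p, hpn⟩ * t := by
    rw [hb2def, htdef, Finset.mul_sum]
    refine Finset.sum_le_sum fun j hj => ?_
    have hjge : ¬ (j : ℕ) < p := by simpa [hGdef] using hj
    have hle : lam j ≤ lam ⟨p, hpn⟩ := by
      apply hlam
      rw [Fin.le_def]
      simp only []
      omega
    exact mul_le_mul_of_nonneg_right hle (by positivity)
  -- s > 0 and t > 0
  have ht_pos : 0 < t := by
    rcases ht0.lt_or_eq with h | h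
    · exact h
    · exfalso
      have hczero : ∀ j ∈ G, ‖c j‖ ^ 2 = 0 := by
        intro j hj
        exact (Finset.sum_eq_zero_iff_of_nonneg (fun j _ => by positivity)).1 h.symm j hj
      have hb20 : b2 = 0 := by
        rw [hb2def]; exact Finset.sum_eq_zero fun j hj => by rw [hczero j hj]; ring
      have hspos : 0 < s := by rw [← h, add_zero] at hstpos; exact hstpos
      have hray : rayleigh A y = a / s := by
        rw [hrayy, hb20, ← h, add_zero, add_zero]
      have : lam ⟨p - 1, hpm1⟩ ≤ rayleigh A y := by
        rw [hray, le_div_iff₀ hspos]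
        exact haub
      exact absurd this (not_le.mpr hylt')
  have hs_pos : 0 < s := by
    rcases hs0.lt_or_eq with h | h
    · exact h
    · exfalso
      have hczero : ∀ j ∈ F, ‖c j‖ ^ 2 = 0 := by
        intro j hj
        exact (Finset.sum_eq_zero_iff_of_nonneg (fun j _ => by positivity)).1 h.symm j hj
      have ha0 : a = 0 := by
        rw [hadef]; exact Finset.sum_eq_zero fun j hj => by rw [hczero j hj]; ring
      have hray : rayleigh A y = b2 / t := by
        rw [hrayy, ha0, ← h, zero_add, zero_add]
      have : rayleigh A y ≤ lam ⟨p, hpn⟩ := by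
        rw [hray, div_le_iff₀ ht_pos]
        exact hbub
      exact absurd this (not_le.mpr hray_gt)
  -- nonvanishing of the two components
  have hypne : yp ≠ 0 := by
    intro h
    rw [hyp'] at h
    have : s = 0 := by rw [← hnpF, h]; simp
    exact hs_pos.ne' this
  have hwne : y - yp ≠ 0 := by
    intro h
    rw [hw] at h
    have : t = 0 := by rw [← hnpG, h]; simp
    exact ht_pos.ne' this
  refine ⟨hypne, hwne, ?_⟩
  -- the algebraic identity
  have hE : 0 < α ^ 2 * s + νp ^ 2 * t := by positivity
  have h1 : a / s - (α ^ 2 * a + νp ^ 2 * b2) / (α ^ 2 * s + νp ^ 2 * t)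
      = νp ^ 2 * (a * t - b2 * s) / (s * (α ^ 2 * s + νp ^ 2 * t)) := by
    field_simp
    ring
  have h2 : (α ^ 2 * a + νp ^ 2 * b2) / (α ^ 2 * s + νp ^ 2 * t) - b2 / t
      = α ^ 2 * (a * t - b2 * s) / (t * (α ^ 2 * s + νp ^ 2 * t)) := by
    field_simp
    ring
  have h3 : a / s - (a + b2) / (s + t) = (a * t - b2 * s) / (s * (s + t)) := by
    field_simp
    ring
  have h4 : (a + b2) / (s + t) - b2 / t = (a * t - b2 * s) / (t * (s + t)) := by
    field_simp
    ring
  have main : (rayleigh A yp - rayleigh A yo) / (rayleigh A yo - rayleigh A (y - yp))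
      = νp ^ 2 / |α| ^ 2 *
        ((rayleigh A yp - rayleigh A y) / (rayleigh A y - rayleigh A (y - yp))) := by
    rw [hrayp, hrayo, hrayw, hrayy, sq_abs, h1, h2, h3, h4]
    by_cases hD : a * t - b2 * s = 0
    · rw [hD]; simp
    · field_simp
  exact main
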